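/- arXiv:2411.09460 — 4 statements merged into one kernel-verified Lean document; each statement's English description precedes it below -/
import Mathlib

section
/- Let w and r be positive integers with r ≤ w. For a composition-vector c = (c_1,...,c_w) of nonnegative integers satisfying Σ_{j=1}^w c_j = r and Σ_{j=1}^w j·c_j = w, the number of binary (s/f) words of length w with exactly r letters 's', whose multiset of cyclic gaps between consecutive 's' letters (gap = cyclic distance from one 's' to the next 's') has exactly c_j gaps of length j for each j, equals (r-1)! · w / (c_1! c_2! ⋯ c_w!). -/
open scoped Classical

/-- The cyclic gap from position `p` to the next element of `S` (cyclically):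
the least positive `k` such that `p + k ∈ S`. -/
noncomputable def cycGap {w : ℕ} [NeZero w] (S : Finset (ZMod w)) (p : ZMod w) : ℕ :=
  sInf {k : ℕ | 0 < k ∧ p + (k : ZMod w) ∈ S}


open Finset

/-- partial sum of first `k` values of `lam`. -/
def psum {r : ℕ} (lam : Fin r → ℕ) (k : ℕ) : ℕ :=
  ∑ i ∈ Finset.univ.filter (fun i : Fin r => (i : ℕ) < k), lam i

lemma psum_zero {r : ℕ} (lam : Fin r → ℕ) : psum lam 0 = 0 := by
  simp [psum]

lemma psum_succ {r : ℕ} (lam : Fin r → ℕ) {k : ℕ} (hk : k < r) :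
    psum lam (k + 1) = psum lam k + lam ⟨k, hk⟩ := by
  unfold psum
  rw [show (Finset.univ.filter (fun i : Fin r => (i : ℕ) < k + 1))
      = insert ⟨k, hk⟩ (Finset.univ.filter (fun i : Fin r => (i : ℕ) < k)) by
    ext i; simp [Fin.ext_iff]; omega]
  rw [Finset.sum_insert (by simp), add_comm]

lemma psum_succ_ge {r : ℕ} (lam : Fin r → ℕ) {k : ℕ} (hk : r ≤ k) :
    psum lam (k + 1) = psum lam k := by
  unfold psum
  congr 1
  ext i; simp; omega

lemma psum_total {r : ℕ} (lam : Fin r → ℕ) : psum lam r = ∑ i, lam i := by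
  unfold psum
  congr 1
  ext i; simp [i.isLt]

lemma psum_mono {r : ℕ} (lam : Fin r → ℕ) : Monotone (psum lam) := by
  intro a b hab
  exact Finset.sum_le_sum_of_subset (by intro i; simp; omega)

lemma psum_strict {r : ℕ} (lam : Fin r → ℕ) (h1 : ∀ i, 1 ≤ lam i)
    {k l : ℕ} (hkl : k < l) (hl : l ≤ r) : psum lam k < psum lam l := by
  have hk : k < r := lt_of_lt_of_le hkl hl
  calc psum lam k < psum lam (k+1) := by
        rw [psum_succ lam hk]; have := h1 ⟨k, hk⟩; omega
    _ ≤ psum lam l := psum_mono lam hkl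

section Pos
variable {w r : ℕ} [NeZero w]

lemma hw_pos : 0 < w := Nat.pos_of_ne_zero (NeZero.ne w)

lemma psum_lt (lam : Fin r → ℕ) (h1 : ∀ i, 1 ≤ lam i) (hsum : ∑ i, lam i = w)
    {k : ℕ} (hk : k < r) : psum lam k < w := by
  have := psum_strict lam h1 hk le_rfl
  rwa [psum_total, hsum] at this

/-- the set of positions determined by start `p` and gap sequence `lam`. -/
noncomputable def posS (p : ZMod w) (lam : Fin r → ℕ) : Finset (ZMod w) :=
  Finset.image (fun k : Fin r => p + ((psum lam k : ℕ) : ZMod w)) Finset.univ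

lemma cast_inj_of_lt {a b : ℕ} (ha : a < w) (hb : b < w) (h : (a : ZMod w) = b) : a = b := by
  have := congrArg ZMod.val h
  rwa [ZMod.val_cast_of_lt ha, ZMod.val_cast_of_lt hb] at this

lemma pos_inj (p : ZMod w) (lam : Fin r → ℕ) (h1 : ∀ i, 1 ≤ lam i) (hsum : ∑ i, lam i = w) :
    Function.Injective (fun k : Fin r => p + ((psum lam k : ℕ) : ZMod w)) := by
  intro a b hab
  simp only [add_right_injective _] at hab
  have hab' : psum lam a = psum lam b :=
    cast_inj_of_lt (psum_lt lam h1 hsum a.isLt) (psum_lt lam h1 hsum b.isLt)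
      (by exact_mod_cast add_left_cancel hab)
  by_contra hne
  rcases Ne.lt_or_gt (fun h : (a:ℕ) = b => hne (Fin.ext h)) with h | h
  · exact absurd hab' (Nat.ne_of_lt (psum_strict lam h1 h b.isLt.le))
  · exact absurd hab'.symm (Nat.ne_of_lt (psum_strict lam h1 h a.isLt.le))

lemma card_posS (p : ZMod w) (lam : Fin r → ℕ) (h1 : ∀ i, 1 ≤ lam i) (hsum : ∑ i, lam i = w) :
    (posS p lam).card = r := by
  rw [posS, Finset.card_image_of_injective _ (pos_inj p lam h1 hsum), Finset.card_univ,
    Fintype.card_fin]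

lemma gap_eq (hr : 0 < r) (p : ZMod w) (lam : Fin r → ℕ)
    (h1 : ∀ i, 1 ≤ lam i) (hsum : ∑ i, lam i = w) (k : Fin r) :
    cycGap (posS p lam) (p + ((psum lam k : ℕ) : ZMod w)) = lam k := by
  have hmemS : ∀ m : ℕ, m < r → p + ((psum lam m : ℕ) : ZMod w) ∈ posS p lam := by
    intro m hm
    exact Finset.mem_image.2 ⟨⟨m, hm⟩, Finset.mem_univ _, rfl⟩
  have hsucc : psum lam (k + 1) = psum lam k + lam k := by
    rw [psum_succ lam k.isLt]
  have hmem : 0 < lam k ∧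
      p + ((psum lam k : ℕ) : ZMod w) + ((lam k : ℕ) : ZMod w) ∈ posS p lam := by
    refine ⟨h1 k, ?_⟩
    rcases Nat.lt_or_ge (k + 1) r with h | h
    · have := hmemS (k + 1) h
      rwa [hsucc, Nat.cast_add, ← add_assoc] at this
    · have hkr : (k : ℕ) + 1 = r := by omega
      have : psum lam k + lam k = w := by
        rw [← hsucc, hkr, psum_total, hsum]
      rw [add_assoc, ← Nat.cast_add, this, ZMod.natCast_self, add_zero]
      have h0 := hmemS 0 hr
      rwa [psum_zero, Nat.cast_zero, add_zero] at h0
  refine le_antisymm (Nat.sInf_le hmem) (le_csInf ⟨_, hmem⟩ ?_)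
  rintro t ⟨ht, htm⟩
  rcases Finset.mem_image.1 htm with ⟨m, -, hm⟩
  by_contra hlt
  push_neg at hlt
  have hklt : psum lam k + t < w := by
    have : psum lam ((k : ℕ) + 1) ≤ w := by
      rw [← hsum, ← psum_total]; exact psum_mono lam k.isLt
    omega
  have heq : psum lam m = psum lam k + t := by
    refine cast_inj_of_lt (psum_lt lam h1 hsum m.isLt) hklt ?_
    have := hm
    rw [add_assoc, ← Nat.cast_add] at this
    exact (add_left_cancel this)
  have hmgt : (k : ℕ) < (m : ℕ) := by
    by_contra hle
    push_neg at hle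
    have := psum_mono lam hle
    omega
  have : psum lam ((k : ℕ) + 1) ≤ psum lam m := psum_mono lam hmgt
  omega

lemma fiber_transfer (hr : 0 < r) (p : ZMod w) (lam : Fin r → ℕ)
    (h1 : ∀ i, 1 ≤ lam i) (hsum : ∑ i, lam i = w) (j : ℕ) :
    ((posS p lam).filter (fun q => cycGap (posS p lam) q = j)).card
      = (Finset.univ.filter (fun i : Fin r => lam i = j)).card := by
  rw [eq_comm]
  refine Finset.card_bij (fun (i : Fin r) (_ : i ∈ Finset.univ.filter (fun i : Fin r => lam i = j)) => p + ((psum lam i : ℕ) : ZMod w)) ?_ ?_ ?_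
  · intro i hi
    simp only [Finset.mem_filter, Finset.mem_univ, true_and] at hi ⊢
    exact ⟨Finset.mem_image.2 ⟨i, Finset.mem_univ _, rfl⟩, by rw [gap_eq hr p lam h1 hsum i, hi]⟩
  · intro a ha b hb hab
    exact pos_inj p lam h1 hsum hab
  · intro q hq
    simp only [Finset.mem_filter] at hq
    rcases Finset.mem_image.1 hq.1 with ⟨m, -, hm⟩
    refine ⟨m, ?_, hm⟩
    simp only [Finset.mem_filter, Finset.mem_univ, true_and]
    rw [← gap_eq hr p lam h1 hsum m, hm, hq.2]

end Pos
lemma card_filter_succ {r : ℕ} (P : Fin (r + 1) → Prop) [DecidablePred P] :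
    (Finset.univ.filter P).card
      = (if P 0 then 1 else 0) + (Finset.univ.filter (fun i : Fin r => P i.succ)).card := by
  rw [Finset.card_filter, Finset.card_filter, Fin.sum_univ_succ]

lemma count_multinomial (w : ℕ) : ∀ (r : ℕ) (c : ℕ → ℕ),
    (∑ j ∈ Finset.Icc 1 w, c j = r) →
    ((Fintype.piFinset fun _ : Fin r => Finset.Icc 1 w).filter
        (fun lam => ∀ j ∈ Finset.Icc 1 w,
          (Finset.univ.filter (fun i => lam i = j)).card = c j)).card
      * ∏ j ∈ Finset.Icc 1 w, (c j).factorial = r.factorial := by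
  intro r
  induction r with
  | zero =>
    intro c hsum
    have hc0 : ∀ j ∈ Finset.Icc 1 w, c j = 0 := fun j hj => (Finset.sum_eq_zero_iff.1 hsum) j hj
    have h1 : ((Fintype.piFinset fun _ : Fin 0 => Finset.Icc 1 w).filter
        (fun lam => ∀ j ∈ Finset.Icc 1 w,
          (Finset.univ.filter (fun i => lam i = j)).card = c j))
        = (Fintype.piFinset fun _ : Fin 0 => Finset.Icc 1 w) := by
      ext lam
      simp only [Finset.mem_filter]
      refine ⟨And.left, fun h => ⟨h, fun j hj => ?_⟩⟩
      rw [hc0 j hj]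
      simp
    have h2 : ∏ j ∈ Finset.Icc 1 w, (c j).factorial = 1 :=
      Finset.prod_eq_one (fun j hj => by rw [hc0 j hj]; rfl)
    rw [h1, h2, Fintype.card_piFinset]
    simp
  | succ r ih =>
    intro c hsum
    set T := ((Fintype.piFinset fun _ : Fin (r+1) => Finset.Icc 1 w).filter
        (fun lam => ∀ j ∈ Finset.Icc 1 w,
          (Finset.univ.filter (fun i => lam i = j)).card = c j)) with hT
    clear_value T
    have hmemT : ∀ lam, lam ∈ T ↔ (lam ∈ (Fintype.piFinset fun _ : Fin (r+1) => Finset.Icc 1 w)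
        ∧ ∀ j ∈ Finset.Icc 1 w, (Finset.univ.filter (fun i => lam i = j)).card = c j) := by
      intro lam
      rw [hT]
      simp only [Finset.mem_filter]
    have hterm : ∀ j ∈ Finset.Icc 1 w,
        (T.filter (fun lam => lam 0 = j)).card * ∏ j' ∈ Finset.Icc 1 w, (c j').factorial
          = c j * r.factorial := by
      intro j hj
      rcases Nat.eq_zero_or_pos (c j) with hcj | hcj
      · have : (T.filter (fun lam => lam 0 = j)) = ∅ := by
          rw [Finset.filter_eq_empty_iff]
          intro lam hlam hl0
          have hp := ((hmemT lam).1 hlam).2 j hj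
          have h1 : 0 < (Finset.univ.filter (fun i => lam i = j)).card :=
            Finset.card_pos.2 ⟨0, Finset.mem_filter.2 ⟨Finset.mem_univ _, hl0⟩⟩
          omega
        rw [this]
        simp [hcj]
      · obtain ⟨m, hm⟩ : ∃ m, c j = m + 1 := ⟨c j - 1, by omega⟩
        set c' := Function.update c j m with hc'
        clear_value c'
        have hc'j : c' j = m := by rw [hc']; simp
        have hc'ne : ∀ j', j' ≠ j → c' j' = c j' := fun j' h => by
          rw [hc']; exact Function.update_of_ne h m c
        have hE : c j + ∑ j' ∈ (Finset.Icc 1 w).erase j, c j' = r + 1 := by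
          rw [Finset.add_sum_erase _ c hj, hsum]
        have hsum' : ∑ j' ∈ Finset.Icc 1 w, c' j' = r := by
          have herase : ∑ j' ∈ (Finset.Icc 1 w).erase j, c' j'
              = ∑ j' ∈ (Finset.Icc 1 w).erase j, c j' :=
            Finset.sum_congr rfl (fun x hx => hc'ne x (Finset.ne_of_mem_erase hx))
          rw [← Finset.add_sum_erase _ c' hj, hc'j, herase]
          omega
        set T' := ((Fintype.piFinset fun _ : Fin r => Finset.Icc 1 w).filter
            (fun lam => ∀ j' ∈ Finset.Icc 1 w,
              (Finset.univ.filter (fun i => lam i = j')).card = c' j')) with hT'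
        clear_value T'
        have hmemT' : ∀ g, g ∈ T' ↔ (g ∈ (Fintype.piFinset fun _ : Fin r => Finset.Icc 1 w)
            ∧ ∀ j' ∈ Finset.Icc 1 w, (Finset.univ.filter (fun i => g i = j')).card = c' j') := by
          intro g
          rw [hT']
          simp only [Finset.mem_filter]
        have hbij : (T.filter (fun lam => lam 0 = j)).card = T'.card := by
          refine Finset.card_bij (fun lam _ => lam ∘ Fin.succ) ?_ ?_ ?_
          · intro lam hlam
            simp only [Finset.mem_filter] at hlam
            obtain ⟨hlamT, hl0⟩ := hlam
            obtain ⟨hpi, hprof⟩ := (hmemT lam).1 hlamT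
            refine (hmemT' _).2 ⟨?_, ?_⟩
            · exact Fintype.mem_piFinset.2 fun i => Fintype.mem_piFinset.1 hpi i.succ
            · intro j' hj'
              have hk := card_filter_succ (fun i => lam i = j')
              have hp := hprof j' hj'
              simp only [Function.comp_apply]
              rcases eq_or_ne j' j with rfl | hne
              · rw [hc'j]
                rw [if_pos hl0] at hk
                omega
              · rw [hc'ne j' hne]
                rw [if_neg (by rw [hl0]; exact fun h => hne h.symm)] at hk
                omega
          · intro a ha b hb hab
            simp only [Finset.mem_filter] at ha hb
            funext i
            refine Fin.cases ?_ ?_ i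
            · rw [ha.2, hb.2]
            · intro i'
              exact congrFun hab i'
          · intro g hg
            obtain ⟨hgpi, hgprof⟩ := (hmemT' g).1 hg
            refine ⟨Fin.cases j g, ?_, ?_⟩
            · simp only [Finset.mem_filter]
              refine ⟨(hmemT _).2 ⟨?_, ?_⟩, by simp⟩
              · refine Fintype.mem_piFinset.2 fun i => ?_
                refine Fin.cases ?_ ?_ i
                · simpa using hj
                · intro i'
                  simpa using Fintype.mem_piFinset.1 hgpi i'
              · intro j' hj'
                have hk := card_filter_succ (fun i => (Fin.cases j g : Fin (r+1) → ℕ) i = j')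
                simp only [Fin.cases_zero, Fin.cases_succ] at hk
                have hp := hgprof j' hj'
                rcases eq_or_ne j' j with rfl | hne
                · rw [hc'j] at hp
                  rw [card_filter_succ, if_pos (by simp), hm, ← hp, add_comm]
                  rfl
                · rw [hc'ne j' hne] at hp
                  rw [card_filter_succ, if_neg (by simp [Ne.symm hne]), ← hp, zero_add]
                  rfl
            · funext i'
              simp
        have hprodsplit : ∏ j' ∈ Finset.Icc 1 w, (c j').factorial
            = c j * ∏ j' ∈ Finset.Icc 1 w, (c' j').factorial := by
          have herase : ∏ j' ∈ (Finset.Icc 1 w).erase j, (c' j').factorial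
              = ∏ j' ∈ (Finset.Icc 1 w).erase j, (c j').factorial :=
            Finset.prod_congr rfl
              (fun x hx => by rw [hc'ne x (Finset.ne_of_mem_erase hx)])
          rw [← Finset.mul_prod_erase _ (fun j' => (c j').factorial) hj,
            ← Finset.mul_prod_erase _ (fun j' => (c' j').factorial) hj, hc'j, herase,
            hm, Nat.factorial_succ]
          ring
        rw [hbij, hprodsplit, mul_left_comm, hT', ih c' hsum']
    have hmapsTo : ∀ lam ∈ T, (fun lam : Fin (r+1) → ℕ => lam 0) lam ∈ Finset.Icc 1 w :=
      fun lam hlam => Fintype.mem_piFinset.1 ((hmemT lam).1 hlam).1 0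
    have hcard := Finset.card_eq_sum_card_fiberwise hmapsTo
    rw [hcard, Finset.sum_mul, Finset.sum_congr rfl hterm, ← Finset.sum_mul, hsum,
      Nat.factorial_succ]
section Assembly
variable {w : ℕ} [NeZero w]

lemma T_facts {r : ℕ} (c : ℕ → ℕ) (hc2 : ∑ j ∈ Finset.Icc 1 w, j * c j = w)
    (lam : Fin r → ℕ)
    (hpi : lam ∈ Fintype.piFinset fun _ : Fin r => Finset.Icc 1 w)
    (hprof : ∀ j ∈ Finset.Icc 1 w, (Finset.univ.filter (fun i => lam i = j)).card = c j) :
    (∀ i, 1 ≤ lam i) ∧ ∑ i, lam i = w := by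
  have hmem : ∀ i, lam i ∈ Finset.Icc 1 w := fun i => Fintype.mem_piFinset.1 hpi i
  refine ⟨fun i => (Finset.mem_Icc.1 (hmem i)).1, ?_⟩
  have h := Finset.sum_fiberwise_of_maps_to (s := (Finset.univ : Finset (Fin r)))
      (g := lam) (t := Finset.Icc 1 w) (fun i _ => hmem i) lam
  rw [← h]
  refine Eq.trans (Finset.sum_congr rfl fun j hj => ?_) hc2
  rw [Finset.sum_congr rfl (fun i hi => (Finset.mem_filter.1 hi).2), Finset.sum_const,
    hprof j hj, smul_eq_mul, mul_comm]

lemma exists_lam {r : ℕ} (hr : 0 < r) (S : Finset (ZMod w)) (hcard : S.card = r) (p : ZMod w)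
    (hp : p ∈ S) :
    ∃ lam : Fin r → ℕ, (∀ i, 1 ≤ lam i) ∧ (∀ i, lam i ≤ w) ∧ (∑ i, lam i = w)
      ∧ posS p lam = S := by
  have hinj : Function.Injective (fun q : ZMod w => (q - p).val) := by
    intro a b hab
    have := ZMod.val_injective w hab
    exact sub_left_injective this
  set V : Finset ℕ := S.image (fun q => (q - p).val) with hV
  have hVcard : V.card = r := by
    rw [hV, Finset.card_image_of_injective _ hinj, hcard]
  set e := V.orderIsoOfFin hVcard with he
  set E : Fin r → ℕ := fun k => (e k : ℕ) with hE
  have hEmono : StrictMono E := fun a b hab => by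
    exact_mod_cast e.strictMono hab
  have hEV : ∀ k, E k ∈ V := fun k => (e k).2
  have hElt : ∀ k, E k < w := by
    intro k
    obtain ⟨q, -, hq⟩ := Finset.mem_image.1 (hEV k)
    rw [← hq]
    exact ZMod.val_lt _
  have h0V : (0 : ℕ) ∈ V := Finset.mem_image.2 ⟨p, hp, by simp⟩
  have hE0 : ∀ h0 : (0:ℕ) < r, E ⟨0, h0⟩ = 0 := by
    intro h0
    have h1 : (⟨0, h0⟩ : Fin r) ≤ e.symm ⟨0, h0V⟩ := by
      exact Fin.mk_le_of_le_val (Nat.zero_le _)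
    have h2 := e.monotone h1
    rw [OrderIso.apply_symm_apply] at h2
    have h3 : E ⟨0, h0⟩ ≤ 0 := h2
    omega
  set lam : Fin r → ℕ :=
    fun k => if h : (k : ℕ) + 1 < r then E ⟨(k : ℕ) + 1, h⟩ - E k else w - E k with hlam
  have hlam_pos : ∀ h : (0:ℕ) < r, True := fun _ => trivial
  have hlamval : ∀ (k : ℕ) (hk : k < r),
      lam ⟨k, hk⟩ = if h : k + 1 < r then E ⟨k + 1, h⟩ - E ⟨k, hk⟩ else w - E ⟨k, hk⟩ := by
    intro k hk
    rw [hlam]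
  have h1 : ∀ i, 1 ≤ lam i := by
    intro i
    rw [hlam]
    simp only
    split
    · rename_i h
      have := hEmono (show i < ⟨(i:ℕ)+1, h⟩ from Fin.mk_lt_of_lt_val (Nat.lt_succ_self _))
      omega
    · have := hElt i
      omega
  have h2 : ∀ i, lam i ≤ w := by
    intro i
    rw [hlam]
    simp only
    split
    · rename_i h
      have := hElt ⟨(i:ℕ)+1, h⟩
      omega
    · omega
  have hps : ∀ (k : ℕ) (hk : k < r), psum lam k = E ⟨k, hk⟩ := by
    intro k
    induction k with
    | zero => intro hk; rw [psum_zero, hE0 hk]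
    | succ k ih =>
      intro hk1
      have hk : k < r := by omega
      rw [psum_succ lam hk, ih hk, hlamval k hk, dif_pos hk1]
      have := hEmono (show (⟨k, hk⟩ : Fin r) < ⟨k+1, hk1⟩ from
        Fin.mk_lt_of_lt_val (Nat.lt_succ_self _))
      omega
  have hr1 : r - 1 < r := by omega
  have hsum : ∑ i, lam i = w := by
    have hre : r = (r - 1) + 1 := by omega
    have hlast := hlamval (r - 1) hr1
    rw [dif_neg (by omega)] at hlast
    have h3 : psum lam ((r-1)+1) = w := by
      rw [psum_succ lam hr1, hps (r-1) hr1, hlast]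
      have := hElt ⟨r-1, hr1⟩
      omega
    rw [← psum_total, ← h3]
    exact congrArg (psum lam) hre
  refine ⟨lam, h1, h2, hsum, ?_⟩
  apply Finset.eq_of_subset_of_card_le
  · intro q hq
    obtain ⟨k, -, hk⟩ := Finset.mem_image.1 hq
    obtain ⟨q', hq', hval⟩ := Finset.mem_image.1 (hEV k)
    have hps' : psum lam (k : ℕ) = E k := by
      rw [hps (k : ℕ) k.isLt]
    rw [← hk, hps', ← hval, ZMod.natCast_rightInverse _]
    simpa using hq'
  · rw [hcard, card_posS p lam h1 hsum]

end Assembly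

/-- the number of cyclic sf-words of length `w` with exactly `r` letters `s`
(encoded as the `Finset` of positions of the `s` letters) whose multiset of cyclic gaps
has exactly `c j` gaps of length `j` (for each `j ∈ {1,…,w}`) equals
`(r-1)! · w / (c_1! ⋯ c_w!)`, stated multiplicatively. -/
theorem stmt0 (w r : ℕ) [NeZero w] (hr : 0 < r) (hrw : r ≤ w)
    (c : ℕ → ℕ)
    (hc1 : ∑ j ∈ Finset.Icc 1 w, c j = r)
    (hc2 : ∑ j ∈ Finset.Icc 1 w, j * c j = w) :
    (Finset.univ.filter (fun S : Finset (ZMod w) =>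
        S.card = r ∧ ∀ j ∈ Finset.Icc 1 w,
          (S.filter (fun p => cycGap S p = j)).card = c j)).card
      * ∏ j ∈ Finset.Icc 1 w, (c j).factorial
    = (r - 1).factorial * w := by
  set G := (Finset.univ.filter (fun S : Finset (ZMod w) =>
        S.card = r ∧ ∀ j ∈ Finset.Icc 1 w,
          (S.filter (fun p => cycGap S p = j)).card = c j)) with hG
  clear_value G
  have hmemG : ∀ S : Finset (ZMod w), S ∈ G ↔ (S.card = r ∧ ∀ j ∈ Finset.Icc 1 w,
      (S.filter (fun p => cycGap S p = j)).card = c j) := by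
    intro S
    rw [hG]
    simp only [Finset.mem_filter, Finset.mem_univ, true_and]
  set T := ((Fintype.piFinset fun _ : Fin r => Finset.Icc 1 w).filter
      (fun lam => ∀ j ∈ Finset.Icc 1 w,
        (Finset.univ.filter (fun i => lam i = j)).card = c j)) with hT
  clear_value T
  have hmemT : ∀ lam : Fin r → ℕ, lam ∈ T ↔
      (lam ∈ (Fintype.piFinset fun _ : Fin r => Finset.Icc 1 w)
        ∧ ∀ j ∈ Finset.Icc 1 w, (Finset.univ.filter (fun i => lam i = j)).card = c j) := by
    intro lam
    rw [hT]
    simp only [Finset.mem_filter]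
  set P := ((Finset.univ : Finset (Finset (ZMod w) × ZMod w)).filter
      (fun x => x.1 ∈ G ∧ x.2 ∈ x.1)) with hP
  clear_value P
  have hmemP : ∀ x : Finset (ZMod w) × ZMod w, x ∈ P ↔ (x.1 ∈ G ∧ x.2 ∈ x.1) := by
    intro x
    rw [hP]
    simp only [Finset.mem_filter, Finset.mem_univ, true_and]
  -- P fiberwise over G
  have hPG : P.card = G.card * r := by
    have hmaps : ∀ x ∈ P, Prod.fst x ∈ G := fun x hx => ((hmemP x).1 hx).1
    have h := Finset.card_eq_sum_card_fiberwise hmaps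
    rw [h]
    have hfib : ∀ S ∈ G, (P.filter (fun x => x.1 = S)).card = r := by
      intro S hS
      have hSr : S.card = r := ((hmemG S).1 hS).1
      rw [← hSr]
      refine Finset.card_bij (fun x _ => x.2) ?_ ?_ ?_
      · intro x hx
        simp only [Finset.mem_filter] at hx
        have h2 := ((hmemP x).1 hx.1).2
        rw [hx.2] at h2
        exact h2
      · intro x hx y hy hxy
        simp only [Finset.mem_filter] at hx hy
        exact Prod.ext (hx.2.trans hy.2.symm) hxy
      · intro q hq
        exact ⟨(S, q), Finset.mem_filter.2 ⟨(hmemP (S, q)).2 ⟨hS, hq⟩, rfl⟩, rfl⟩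
    rw [Finset.sum_congr rfl hfib, Finset.sum_const, smul_eq_mul]
  -- P via bijection with (ZMod w) × T
  have hPT : P.card = w * T.card := by
    have hcardD : ((Finset.univ : Finset (ZMod w)) ×ˢ T).card = w * T.card := by
      rw [Finset.card_product, Finset.card_univ, ZMod.card]
    rw [← hcardD]
    refine (Finset.card_bij (fun (x : ZMod w × (Fin r → ℕ))
        (_ : x ∈ (Finset.univ : Finset (ZMod w)) ×ˢ T) => (posS x.1 x.2, x.1)) ?_ ?_ ?_).symm
    · rintro ⟨p, lam⟩ hx
      rw [Finset.mem_product] at hx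
      obtain ⟨hpi, hprof⟩ := (hmemT lam).1 hx.2
      obtain ⟨h1, hsum⟩ := T_facts c hc2 lam hpi hprof
      refine (hmemP _).2 ⟨?_, ?_⟩
      · refine (hmemG _).2 ⟨card_posS p lam h1 hsum, fun j hj => ?_⟩
        rw [fiber_transfer hr p lam h1 hsum j]
        exact hprof j hj
      · refine Finset.mem_image.2 ⟨⟨0, hr⟩, Finset.mem_univ _, ?_⟩
        rw [psum_zero]
        simp
    · rintro ⟨p, lam⟩ hx ⟨p', lam'⟩ hx' hxy
      rw [Finset.mem_product] at hx hx'
      obtain ⟨hpi, hprof⟩ := (hmemT lam).1 hx.2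
      obtain ⟨h1, hsum⟩ := T_facts c hc2 lam hpi hprof
      obtain ⟨hpi', hprof'⟩ := (hmemT lam').1 hx'.2
      obtain ⟨h1', hsum'⟩ := T_facts c hc2 lam' hpi' hprof'
      have hpp : p = p' := congrArg Prod.snd hxy
      subst hpp
      have hSeq : posS p lam = posS p lam' := congrArg Prod.fst hxy
      have key : ∀ k : ℕ, psum lam k = psum lam' k := by
        intro k
        induction k with
        | zero => rw [psum_zero, psum_zero]
        | succ k ih =>
          rcases Nat.lt_or_ge k r with hk | hk
          · rw [psum_succ lam hk, psum_succ lam' hk, ih]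
            congr 1
            have g1 := gap_eq hr p lam h1 hsum ⟨k, hk⟩
            have g2 := gap_eq hr p lam' h1' hsum' ⟨k, hk⟩
            rw [← g1, ← g2, hSeq, ih]
          · rw [psum_succ_ge lam hk, psum_succ_ge lam' hk, ih]
      have key2 : ∀ (k : ℕ) (hk : k < r), lam ⟨k, hk⟩ = lam' ⟨k, hk⟩ := by
        intro k hk
        have e1 := psum_succ lam hk
        have e2 := psum_succ lam' hk
        have k1 := key k
        have k2 := key (k + 1)
        omega
      have : lam = lam' := by
        funext i
        have := key2 i.1 i.2
        simpa using this
      rw [this]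
    · rintro ⟨S, p⟩ hx
      obtain ⟨hSG, hpS⟩ := (hmemP _).1 hx
      have hSr : S.card = r := ((hmemG S).1 hSG).1
      obtain ⟨lam, h1, h2, hsum, himg⟩ := exists_lam hr S hSr p hpS
      refine ⟨(p, lam), ?_, ?_⟩
      · rw [Finset.mem_product]
        refine ⟨Finset.mem_univ _, (hmemT lam).2 ⟨?_, ?_⟩⟩
        · exact Fintype.mem_piFinset.2 fun i => Finset.mem_Icc.2 ⟨h1 i, h2 i⟩
        · intro j hj
          rw [← fiber_transfer hr p lam h1 hsum j, himg]
          exact ((hmemG S).1 hSG).2 j hj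
      · show (posS p lam, p) = (S, p)
        rw [himg]
  -- multinomial count
  have hA : T.card * ∏ j ∈ Finset.Icc 1 w, (c j).factorial = r.factorial := by
    rw [hT]
    exact count_multinomial w r c hc1
  -- assemble
  have hfact : r.factorial = r * (r - 1).factorial := by
    obtain ⟨m, rfl⟩ : ∃ m, r = m + 1 := ⟨r - 1, by omega⟩
    rw [Nat.factorial_succ]
    simp
  have hmain : (G.card * ∏ j ∈ Finset.Icc 1 w, (c j).factorial) * r
      = ((r - 1).factorial * w) * r := by
    calc (G.card * ∏ j ∈ Finset.Icc 1 w, (c j).factorial) * r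
        = (G.card * r) * ∏ j ∈ Finset.Icc 1 w, (c j).factorial := by ring
      _ = P.card * ∏ j ∈ Finset.Icc 1 w, (c j).factorial := by rw [hPG]
      _ = (w * T.card) * ∏ j ∈ Finset.Icc 1 w, (c j).factorial := by rw [hPT]
      _ = w * (T.card * ∏ j ∈ Finset.Icc 1 w, (c j).factorial) := by ring
      _ = w * r.factorial := by rw [hA]
      _ = ((r - 1).factorial * w) * r := by rw [hfact]; ring
  exact Nat.eq_of_mul_eq_mul_right hr hmain
end

section
/- Let p be a prime, q ≥ 2p-1 coprime with p, L = pq, w = p. For 1 ≤ g ≠ g' ≤ p, the CRT sequences v_g and v_{g'} have Hamming cross-correlation at most 1 for every cyclic shift: for all τ ∈ Z_L, the number of t ∈ Z_L with v_g(t) = 1 and v_{g'}(t ⊕_L τ) = 1 is at most 1. -/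
open scoped Classical

/-- two distinct CRT sequences `v_g`, `v_{g'}` (`1 ≤ g ≠ g' ≤ p`,
`p` prime, `q ≥ 2p - 1` coprime with `p`, `L = pq`, `w = p`) have Hamming
cross-correlation at most `1` for every cyclic shift `τ`. -/
theorem stmt4 (p q g g' : ℕ) (hp : p.Prime) (hco : Nat.Coprime p q)
    (hq : 2 * p - 1 ≤ q) (hg1 : 1 ≤ g) (hgp : g ≤ p) (hg'1 : 1 ≤ g') (hg'p : g' ≤ p)
    (hne : g ≠ g') (τ : ℕ) (hτ : τ < p * q) :
    ((Finset.range (p * q)).filter (fun t =>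
        (∃ u < p, t % p = (u * g) % p ∧ t % q = u % q) ∧
        (∃ u < p, (t + τ) % (p * q) % p = (u * g') % p ∧
                  (t + τ) % (p * q) % q = u % q))).card ≤ 1 := by
  have hp2 := hp.two_le
  apply Finset.card_le_one.mpr
  intro t1 ht1 t2 ht2
  simp only [Finset.mem_filter, Finset.mem_range] at ht1 ht2
  obtain ⟨hlt1, ⟨u1, hu1p, ha1, hb1⟩, ⟨v1, hv1p, hc1, hd1⟩⟩ := ht1
  obtain ⟨hlt2, ⟨u2, hu2p, ha2, hb2⟩, ⟨v2, hv2p, hc2, hd2⟩⟩ := ht2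
  have hpd : p ∣ p * q := ⟨q, rfl⟩
  have hqd : q ∣ p * q := ⟨p, Nat.mul_comm p q⟩
  rw [Nat.mod_mod_of_dvd _ hpd] at hc1 hc2
  rw [Nat.mod_mod_of_dvd _ hqd] at hd1 hd2
  -- integer congruences
  have A1 : (t1 : ℤ) ≡ (u1 : ℤ) * g [ZMOD (p : ℤ)] := by
    have h : (t1 : ℤ) ≡ ((u1 * g : ℕ) : ℤ) [ZMOD (p : ℤ)] := Int.natCast_modEq_iff.mpr ha1
    simpa using h
  have A2 : (t2 : ℤ) ≡ (u2 : ℤ) * g [ZMOD (p : ℤ)] := by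
    have h : (t2 : ℤ) ≡ ((u2 * g : ℕ) : ℤ) [ZMOD (p : ℤ)] := Int.natCast_modEq_iff.mpr ha2
    simpa using h
  have C1 : ((t1 : ℤ) + τ) ≡ (v1 : ℤ) * g' [ZMOD (p : ℤ)] := by
    have h : ((t1 + τ : ℕ) : ℤ) ≡ ((v1 * g' : ℕ) : ℤ) [ZMOD (p : ℤ)] :=
      Int.natCast_modEq_iff.mpr hc1
    simpa using h
  have C2 : ((t2 : ℤ) + τ) ≡ (v2 : ℤ) * g' [ZMOD (p : ℤ)] := by
    have h : ((t2 + τ : ℕ) : ℤ) ≡ ((v2 * g' : ℕ) : ℤ) [ZMOD (p : ℤ)] :=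
      Int.natCast_modEq_iff.mpr hc2
    simpa using h
  have B1 : (t1 : ℤ) ≡ (u1 : ℤ) [ZMOD (q : ℤ)] := Int.natCast_modEq_iff.mpr hb1
  have B2 : (t2 : ℤ) ≡ (u2 : ℤ) [ZMOD (q : ℤ)] := Int.natCast_modEq_iff.mpr hb2
  have D1 : ((t1 : ℤ) + τ) ≡ (v1 : ℤ) [ZMOD (q : ℤ)] := by
    have h : ((t1 + τ : ℕ) : ℤ) ≡ ((v1 : ℕ) : ℤ) [ZMOD (q : ℤ)] := Int.natCast_modEq_iff.mpr hd1
    simpa using h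
  have D2 : ((t2 : ℤ) + τ) ≡ (v2 : ℤ) [ZMOD (q : ℤ)] := by
    have h : ((t2 + τ : ℕ) : ℤ) ≡ ((v2 : ℕ) : ℤ) [ZMOD (q : ℤ)] := Int.natCast_modEq_iff.mpr hd2
    simpa using h
  set D : ℤ := (u1 : ℤ) - u2 with hD
  set D' : ℤ := (v1 : ℤ) - v2 with hD'
  -- mod q: D ≡ D'
  have hqDD : (q : ℤ) ∣ D - D' := by
    have h1 : (q : ℤ) ∣ (t1 : ℤ) - u1 := Int.ModEq.dvd B1.symm
    have h2 : (q : ℤ) ∣ (t2 : ℤ) - u2 := Int.ModEq.dvd B2.symm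
    have h3 : (q : ℤ) ∣ ((t1 : ℤ) + τ) - v1 := Int.ModEq.dvd D1.symm
    have h4 : (q : ℤ) ∣ ((t2 : ℤ) + τ) - v2 := Int.ModEq.dvd D2.symm
    have h := (h1.sub h2).sub (h3.sub h4)
    have heq : (t1 : ℤ) - u1 - ((t2 : ℤ) - u2) - (((t1 : ℤ) + τ) - v1 - (((t2 : ℤ) + τ) - v2)) = -(D - D') := by
      rw [hD, hD']; ring
    rw [heq] at h
    exact (dvd_neg.mp h)
  -- |D - D'| < q
  have hqZ : (2 * p - 1 : ℤ) ≤ q := by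
    have : ((2 * p - 1 : ℕ) : ℤ) ≤ q := by exact_mod_cast hq
    have h2p : (1 : ℕ) ≤ 2 * p := by omega
    push_cast [h2p] at this
    linarith
  have habs : |D - D'| < q := by
    have h1 : (u1 : ℤ) < p := by exact_mod_cast hu1p
    have h2 : (u2 : ℤ) < p := by exact_mod_cast hu2p
    have h3 : (v1 : ℤ) < p := by exact_mod_cast hv1p
    have h4 : (v2 : ℤ) < p := by exact_mod_cast hv2p
    have h5 : (0 : ℤ) ≤ u1 := Int.natCast_nonneg _
    have h6 : (0 : ℤ) ≤ u2 := Int.natCast_nonneg _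
    have h7 : (0 : ℤ) ≤ v1 := Int.natCast_nonneg _
    have h8 : (0 : ℤ) ≤ v2 := Int.natCast_nonneg _
    rw [abs_lt]
    constructor <;> [linarith; linarith]
  have hDD : D = D' := by
    have := Int.eq_zero_of_abs_lt_dvd hqDD habs
    linarith
  -- mod p : D * g ≡ D * g'
  have hpdvd : (p : ℤ) ∣ D * g - D * g' := by
    have h1 : (p : ℤ) ∣ (t1 : ℤ) - u1 * g := Int.ModEq.dvd A1.symm
    have h2 : (p : ℤ) ∣ (t2 : ℤ) - u2 * g := Int.ModEq.dvd A2.symm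
    have h3 : (p : ℤ) ∣ ((t1 : ℤ) + τ) - v1 * g' := Int.ModEq.dvd C1.symm
    have h4 : (p : ℤ) ∣ ((t2 : ℤ) + τ) - v2 * g' := Int.ModEq.dvd C2.symm
    have := (h3.sub h4).sub (h1.sub h2)
    have h5 : ((t1 : ℤ) + τ - v1 * g' - ((t2 : ℤ) + τ - v2 * g')) -
        ((t1 : ℤ) - u1 * g - ((t2 : ℤ) - u2 * g)) = D * g - D' * g' := by
      rw [hD, hD']; ring
    rw [h5, ← hDD] at this
    exact this
  have hpfac : (p : ℤ) ∣ D * ((g : ℤ) - g') := by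
    have : D * g - D * g' = D * ((g : ℤ) - g') := by ring
    rwa [this] at hpdvd
  have hpInt : Prime (p : ℤ) := Nat.prime_iff_prime_int.mp hp
  have hnotdvd : ¬ (p : ℤ) ∣ ((g : ℤ) - g') := by
    intro h
    have hgZ : (1 : ℤ) ≤ g := by exact_mod_cast hg1
    have hgZ' : (1 : ℤ) ≤ g' := by exact_mod_cast hg'1
    have hgpZ : (g : ℤ) ≤ p := by exact_mod_cast hgp
    have hgpZ' : (g' : ℤ) ≤ p := by exact_mod_cast hg'p
    have hne' : (g : ℤ) - g' ≠ 0 := by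
      intro h0
      apply hne
      have : (g : ℤ) = g' := by linarith
      exact_mod_cast this
    have habs' : |(g : ℤ) - g'| < p := by
      rw [abs_lt]; constructor <;> linarith
    have := Int.eq_zero_of_abs_lt_dvd h habs'
    exact hne' this
  have hpD : (p : ℤ) ∣ D := ((hpInt.dvd_mul.mp hpfac).resolve_right hnotdvd)
  have hDzero : D = 0 := by
    apply Int.eq_zero_of_abs_lt_dvd hpD
    have h1 : (u1 : ℤ) < p := by exact_mod_cast hu1p
    have h2 : (u2 : ℤ) < p := by exact_mod_cast hu2p
    have h5 : (0 : ℤ) ≤ u1 := Int.natCast_nonneg _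
    have h6 : (0 : ℤ) ≤ u2 := Int.natCast_nonneg _
    rw [abs_lt]; constructor <;> linarith
  have hu : u1 = u2 := by
    have : (u1 : ℤ) = u2 := by rw [hD] at hDzero; linarith
    exact_mod_cast this
  -- now t1 ≡ t2 mod p and mod q
  have hmp : t1 ≡ t2 [MOD p] := by
    have := ha1.trans (hu ▸ ha2.symm : (u1 * g) % p = t2 % p)
    exact this
  have hmq : t1 ≡ t2 [MOD q] := by
    exact hb1.trans (hu ▸ hb2.symm : u1 % q = t2 % q)
  have hmpq : t1 ≡ t2 [MOD p * q] :=
    (Nat.modEq_and_modEq_iff_modEq_mul hco).mp ⟨hmp, hmq⟩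
  calc t1 = t1 % (p * q) := (Nat.mod_eq_of_lt hlt1).symm
    _ = t2 % (p * q) := hmpq
    _ = t2 := Nat.mod_eq_of_lt hlt2
end

section
/- Let N ≥ 2, and let w, L be positive integers with L ≥ w². Suppose each of N-1 'interfering' sequences, independently and uniformly shifted over Z_L, blocks any particular fixed '1' (out of w designated '1's) with exactly w shift values each, and is conflict-free for L - w² shift values. Then for 0 ≤ r ≤ w, the probability that a specific set of exactly r of the w '1's survive (the other w-r are each blocked) is P_r = (1/L^{N-1}) Σ_{n=w-r}^{N-1} binomial(N-1, n) (w-r)! S(n, w-r) w^n (L - w²)^{N-1-n}, where S(n, k) is the Stirling number of the second kind. Equivalently (w-r)! S(n, w-r) = Σ_{m=0}^{w-r} (-1)^m binomial(w-r, m) (w-r-m)^n. -/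
open scoped Classical

open Finset

private lemma count_pi {σ : Type*} [Fintype σ] (ι : Type*) [Fintype ι] (p : σ → Prop) :
    (Finset.univ.filter fun τ : ι → σ => ∀ k, p (τ k)).card
      = (Finset.univ.filter p).card ^ (Fintype.card ι) := by
  classical
  rw [← Fintype.card_subtype, ← Fintype.card_subtype]
  rw [Fintype.card_congr (Equiv.subtypePiEquivPi (p := fun _ : ι => p))]
  rw [Fintype.card_pi]
  simp

private lemma ie {γ β : Type*} [Fintype γ] [Fintype β] (A B : Finset β)
    (hAB : Disjoint A B) (Q : β → γ → Prop) :
    (((Finset.univ.filter fun g : γ => (∀ i ∈ A, Q i g) ∧ ∀ i ∈ B, ¬ Q i g).card : ℝ))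
      = ∑ T ∈ B.powerset, (-1 : ℝ) ^ T.card *
          ((Finset.univ.filter fun g : γ => ∀ i ∈ A ∪ T, Q i g).card : ℝ) := by
  classical
  have key : ∀ g : γ,
      (if (∀ i ∈ A, Q i g) ∧ ∀ i ∈ B, ¬ Q i g then (1 : ℝ) else 0)
        = ∑ T ∈ B.powerset, (-1 : ℝ) ^ T.card *
            (if ∀ i ∈ A ∪ T, Q i g then (1 : ℝ) else 0) := by
    intro g
    have h1 : (if (∀ i ∈ A, Q i g) ∧ ∀ i ∈ B, ¬ Q i g then (1 : ℝ) else 0)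
        = (∏ i ∈ A, if Q i g then (1 : ℝ) else 0)
          * ∏ i ∈ B, (1 - if Q i g then (1 : ℝ) else 0) := by
      rw [Finset.prod_boole]
      have : ∀ i ∈ B, (1 - if Q i g then (1 : ℝ) else 0)
          = if ¬ Q i g then (1 : ℝ) else 0 := by
        intro i _; by_cases h : Q i g <;> simp [h]
      rw [Finset.prod_congr rfl this, Finset.prod_boole]
      split_ifs <;> simp_all
    have h2 : ∀ i ∈ B, (1 - if Q i g then (1 : ℝ) else 0)
        = (-(if Q i g then (1 : ℝ) else 0)) + 1 := by intro i _; ring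
    rw [h1, Finset.prod_congr rfl h2, Finset.prod_add, Finset.mul_sum]
    refine Finset.sum_congr rfl fun T hT => ?_
    have hTB : T ⊆ B := Finset.mem_powerset.1 hT
    have hdisj : Disjoint A T := hAB.mono_right hTB
    have hneg : (∏ i ∈ T, (-(if Q i g then (1 : ℝ) else 0)))
        = (-1 : ℝ) ^ T.card * ∏ i ∈ T, (if Q i g then (1 : ℝ) else 0) := by
      rw [← Finset.prod_const, ← Finset.prod_mul_distrib]
      exact Finset.prod_congr rfl fun i _ => by ring
    rw [hneg, Finset.prod_const_one, mul_one, mul_left_comm,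
      ← Finset.prod_union hdisj, Finset.prod_boole]
    congr!
  rw [← Finset.sum_boole]
  rw [Finset.sum_congr rfl fun g _ => key g, Finset.sum_comm]
  refine Finset.sum_congr rfl fun T _ => ?_
  rw [← Finset.mul_sum, Finset.sum_boole]

private lemma group_by_card {β : Type*} (B : Finset β) (f : ℕ → ℝ) :
    ∑ T ∈ B.powerset, (-1 : ℝ) ^ T.card * f T.card
      = ∑ m ∈ range (B.card + 1), (B.card.choose m : ℝ) * ((-1 : ℝ) ^ m * f m) := by
  classical
  rw [Finset.sum_powerset]
  refine Finset.sum_congr rfl fun m hm => ?_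
  have hstep : ∀ T ∈ B.powersetCard m, (-1 : ℝ) ^ T.card * f T.card
      = (-1 : ℝ) ^ m * f m := by
    intro T hT
    rw [(Finset.mem_powersetCard.1 hT).2]
  rw [Finset.sum_congr rfl hstep, Finset.sum_const, Finset.card_powersetCard,
    nsmul_eq_mul]

private lemma surj_vanish (k n : ℕ) (hn : n < k) :
    ∑ m ∈ range (k + 1), (-1 : ℝ) ^ m * ((k.choose m : ℕ) : ℝ) * ((k - m : ℕ) : ℝ) ^ n
      = 0 := by
  classical
  -- restate `ie` with ambient decidability instances
  have h : (((Finset.univ.filter fun g : Fin n → Fin k =>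
        (∀ i ∈ (∅ : Finset (Fin k)), ∀ x, g x ≠ i) ∧
          ∀ i ∈ Finset.univ, ¬ ∀ x, g x ≠ i).card : ℝ))
      = ∑ T ∈ (Finset.univ : Finset (Fin k)).powerset, (-1 : ℝ) ^ T.card *
          ((Finset.univ.filter fun g : Fin n → Fin k =>
              ∀ i ∈ (∅ : Finset (Fin k)) ∪ T, ∀ x, g x ≠ i).card : ℝ) := by
    convert ie (γ := Fin n → Fin k) (A := (∅ : Finset (Fin k))) (B := Finset.univ)
      disjoint_bot_left (fun i g => ∀ x, g x ≠ i) using 2 <;> congr!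
  have hempty : (Finset.univ.filter fun g : Fin n → Fin k =>
      (∀ i ∈ (∅ : Finset (Fin k)), ∀ x, g x ≠ i) ∧
        ∀ i ∈ Finset.univ, ¬ ∀ x, g x ≠ i) = ∅ := by
    refine Finset.filter_false_of_mem fun g _ => ?_
    rintro ⟨-, hsurj⟩
    have hs : Function.Surjective g := by
      intro i
      have := hsurj i (Finset.mem_univ i)
      push_neg at this
      exact this
    have := Fintype.card_le_of_surjective g hs
    simp only [Fintype.card_fin] at this
    omega
  rw [hempty] at h
  simp only [Finset.card_empty, Nat.cast_zero] at h
  have hcount : ∀ T : Finset (Fin k),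
      (Finset.univ.filter fun g : Fin n → Fin k =>
        ∀ i ∈ (∅ : Finset (Fin k)) ∪ T, ∀ x, g x ≠ i).card = (k - T.card) ^ n := by
    intro T
    have e0 : (Finset.univ.filter fun g : Fin n → Fin k =>
        ∀ i ∈ (∅ : Finset (Fin k)) ∪ T, ∀ x, g x ≠ i)
        = Finset.univ.filter fun g : Fin n → Fin k =>
            ∀ x, (fun s => ∀ i ∈ T, s ≠ i) (g x) := by
      refine Finset.filter_congr fun g _ => ?_
      simp only [Finset.empty_union]
      constructor
      · intro h x i hi; exact h i hi x
      · intro h i hi x; exact h x i hi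
    have hcp : (Finset.univ.filter fun g : Fin n → Fin k =>
        ∀ x, (fun s => ∀ i ∈ T, s ≠ i) (g x)).card
        = (Finset.univ.filter fun s : Fin k => ∀ i ∈ T, s ≠ i).card ^ n := by
      convert count_pi (Fin n) (fun s : Fin k => ∀ i ∈ T, s ≠ i) using 2 <;>
        try congr!
      all_goals rw [Fintype.card_fin]
    have e1 : (Finset.univ.filter fun s : Fin k => ∀ i ∈ T, s ≠ i) = Tᶜ := by
      ext s
      simp only [Finset.mem_filter, Finset.mem_univ, true_and, Finset.mem_compl]
      constructor
      · intro h hs; exact h s hs rfl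
      · intro hs i hi he; exact hs (he ▸ hi)
    rw [e0, hcp, e1, Finset.card_compl, Fintype.card_fin]
  have h2 : (0 : ℝ) = ∑ T ∈ (Finset.univ : Finset (Fin k)).powerset,
      (-1 : ℝ) ^ T.card * (((k - T.card) ^ n : ℕ) : ℝ) := by
    rw [h]
    exact Finset.sum_congr rfl fun T _ => by rw [hcount T]
  rw [group_by_card (Finset.univ : Finset (Fin k))
    (fun m => (((k - m) ^ n : ℕ) : ℝ))] at h2
  simp only [Finset.card_univ, Fintype.card_fin] at h2
  calc ∑ m ∈ range (k + 1), (-1 : ℝ) ^ m * ((k.choose m : ℕ) : ℝ) * ((k - m : ℕ) : ℝ) ^ n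
      = ∑ m ∈ range (k + 1), ((k.choose m : ℕ) : ℝ) *
          ((-1 : ℝ) ^ m * (((k - m) ^ n : ℕ) : ℝ)) := by
        refine Finset.sum_congr rfl fun m _ => ?_
        push_cast
        ring
    _ = 0 := h2.symm

/-- blocking model for the probability `P_r`.  Each of the `N-1`
interfering users independently takes a uniform shift in `Z_L` (here `Fin L`);
`block s = some i` means shift `s` blocks the `i`-th of the `w` designated '1's
(exactly `w` shifts block each given '1', hence `L - w²` shifts block none).
The probability (number of shift-vectors divided by `L^{N-1}`) that the set of
surviving '1's is exactly a given `r`-set `A` equals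
`(1/L^{N-1}) Σ_{n=w-r}^{N-1} C(N-1,n) (Σ_{m=0}^{w-r} (-1)^m C(w-r,m) (w-r-m)^n) w^n (L-w²)^{N-1-n}`. -/
theorem stmt8 (N w L r : ℕ) (hN : 2 ≤ N) (hw : 0 < w) (hL : w ^ 2 ≤ L) (hr : r ≤ w)
    (block : Fin L → Option (Fin w))
    (hblock : ∀ i : Fin w, (Finset.univ.filter (fun s => block s = some i)).card = w)
    (A : Finset (Fin w)) (hA : A.card = r) :
    ((Finset.univ.filter (fun τ : Fin (N - 1) → Fin L =>
          ∀ i : Fin w, i ∈ A ↔ ∀ k, block (τ k) ≠ some i)).card : ℝ) / (L : ℝ) ^ (N - 1)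
    = (1 / (L : ℝ) ^ (N - 1)) *
        ∑ n ∈ Finset.Icc (w - r) (N - 1),
          ((N - 1).choose n : ℝ) *
            (∑ m ∈ Finset.range (w - r + 1),
              (-1 : ℝ) ^ m * ((w - r).choose m : ℝ) * ((w - r - m : ℕ) : ℝ) ^ n) *
            (w : ℝ) ^ n * ((L - w ^ 2 : ℕ) : ℝ) ^ (N - 1 - n) := by
  classical
  set M := N - 1 with hM
  set k0 := w - r with hk0
  -- cast helper
  have hcast : ∀ m ≤ k0, ((k0 - m : ℕ) : ℝ) * w + ((L - w ^ 2 : ℕ) : ℝ)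
      = ((L - (r + m) * w : ℕ) : ℝ) := by
    intro m hm
    have h1 : (r + m) * w ≤ L := by
      calc (r + m) * w ≤ w * w := Nat.mul_le_mul_right w (by omega)
        _ = w ^ 2 := (sq w).symm
        _ ≤ L := hL
    have h2 : m + r ≤ w := by omega
    rw [Nat.cast_sub h1, Nat.cast_sub hL, Nat.cast_sub (by omega : m ≤ k0)]
    rw [hk0, Nat.cast_sub hr]
    push_cast
    ring
  -- count of shifts avoiding a set C of ones
  have hmiss : ∀ C : Finset (Fin w),
      (Finset.univ.filter fun s : Fin L => ∀ i ∈ C, block s ≠ some i).card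
        = L - C.card * w := by
    intro C
    have hneg : (Finset.univ.filter fun s : Fin L => ¬ ∀ i ∈ C, block s ≠ some i)
        = C.biUnion fun i => Finset.univ.filter fun s => block s = some i := by
      ext s
      simp only [Finset.mem_filter, Finset.mem_univ, true_and, Finset.mem_biUnion]
      push_neg
      constructor
      · rintro ⟨i, hi, hb⟩; exact ⟨i, hi, hb⟩
      · rintro ⟨i, hi, hb⟩; exact ⟨i, hi, hb⟩
    have hcardneg : (Finset.univ.filter fun s : Fin L =>
        ¬ ∀ i ∈ C, block s ≠ some i).card = C.card * w := by
      rw [hneg, Finset.card_biUnion]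
      · rw [Finset.sum_congr rfl fun i _ => hblock i, Finset.sum_const, smul_eq_mul]
      · intro i _ j _ hij
        refine Finset.disjoint_left.2 fun s hs hs' => ?_
        simp only [Finset.mem_filter] at hs hs'
        exact hij (Option.some_injective _ (hs.2 ▸ hs'.2 ▸ rfl))
    have htot := Finset.card_filter_add_card_filter_not
      (s := (Finset.univ : Finset (Fin L)))
      (p := fun s : Fin L => ∀ i ∈ C, block s ≠ some i)
    rw [Finset.card_univ, Fintype.card_fin] at htot
    omega
  -- rewrite the filter into conjunction form
  have hfil : (Finset.univ.filter (fun τ : Fin M → Fin L =>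
        ∀ i : Fin w, i ∈ A ↔ ∀ k, block (τ k) ≠ some i))
      = Finset.univ.filter fun τ : Fin M → Fin L =>
          (∀ i ∈ A, ∀ k, block (τ k) ≠ some i) ∧
            ∀ i ∈ Aᶜ, ¬ ∀ k, block (τ k) ≠ some i := by
    refine Finset.filter_congr fun τ _ => ?_
    constructor
    · intro h
      refine ⟨fun i hi => (h i).1 hi, fun i hi hmissi => ?_⟩
      exact (Finset.mem_compl.1 hi) ((h i).2 hmissi)
    · rintro ⟨h1, h2⟩ i
      refine ⟨h1 i, fun hmissi => ?_⟩
      by_contra hi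
      exact h2 i (Finset.mem_compl.2 hi) hmissi
  -- inclusion-exclusion, restated with ambient instances
  have hIE : ((Finset.univ.filter fun τ : Fin M → Fin L =>
        (∀ i ∈ A, ∀ k, block (τ k) ≠ some i) ∧
          ∀ i ∈ Aᶜ, ¬ ∀ k, block (τ k) ≠ some i).card : ℝ)
      = ∑ T ∈ Aᶜ.powerset, (-1 : ℝ) ^ T.card *
          ((Finset.univ.filter fun τ : Fin M → Fin L =>
              ∀ i ∈ A ∪ T, ∀ k, block (τ k) ≠ some i).card : ℝ) := by
    convert ie (γ := Fin M → Fin L) (A := A) (B := Aᶜ) disjoint_compl_right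
      (fun i τ => ∀ k, block (τ k) ≠ some i) using 2 <;> congr!
  -- evaluate the per-T counts
  have hT : ∀ T ∈ Aᶜ.powerset,
      (Finset.univ.filter fun τ : Fin M → Fin L =>
          ∀ i ∈ A ∪ T, ∀ k, block (τ k) ≠ some i).card
        = (L - (r + T.card) * w) ^ M := by
    intro T hTmem
    have hTsub : T ⊆ Aᶜ := Finset.mem_powerset.1 hTmem
    have hdisj : Disjoint A T := by
      refine Finset.disjoint_left.2 fun i hiA hiT => ?_
      exact (Finset.mem_compl.1 (hTsub hiT)) hiA
    have e0 : (Finset.univ.filter fun τ : Fin M → Fin L =>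
        ∀ i ∈ A ∪ T, ∀ k, block (τ k) ≠ some i)
        = Finset.univ.filter fun τ : Fin M → Fin L =>
            ∀ k, (fun s => ∀ i ∈ A ∪ T, block s ≠ some i) (τ k) := by
      refine Finset.filter_congr fun τ _ => ?_
      constructor
      · intro h x i hi; exact h i hi x
      · intro h i hi x; exact h x i hi
    have hcp : (Finset.univ.filter fun τ : Fin M → Fin L =>
        ∀ k, (fun s => ∀ i ∈ A ∪ T, block s ≠ some i) (τ k)).card
        = (Finset.univ.filter fun s : Fin L => ∀ i ∈ A ∪ T, block s ≠ some i).card ^ M := by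
      convert count_pi (Fin M) (fun s : Fin L => ∀ i ∈ A ∪ T, block s ≠ some i) using 2 <;>
        try congr!
      all_goals rw [Fintype.card_fin]
    rw [e0, hcp, hmiss (A ∪ T), Finset.card_union_of_disjoint hdisj, hA]
  -- main count
  have hAc : Aᶜ.card = k0 := by
    rw [Finset.card_compl, hA, Fintype.card_fin]
  have hcount : ((Finset.univ.filter (fun τ : Fin M → Fin L =>
        ∀ i : Fin w, i ∈ A ↔ ∀ k, block (τ k) ≠ some i)).card : ℝ)
      = ∑ m ∈ range (k0 + 1), (k0.choose m : ℝ) *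
          ((-1 : ℝ) ^ m * ((L - (r + m) * w : ℕ) : ℝ) ^ M) := by
    rw [hfil, hIE]
    rw [Finset.sum_congr rfl fun T hTmem => by rw [hT T hTmem]]
    have := group_by_card Aᶜ (fun m => (((L - (r + m) * w : ℕ) : ℝ)) ^ M)
    rw [hAc] at this
    rw [← this]
    refine Finset.sum_congr rfl fun T _ => ?_
    push_cast
    ring
  -- rewrite the RHS sum
  have hRHS : (∑ n ∈ Finset.Icc k0 M,
        ((M.choose n : ℕ) : ℝ) *
          (∑ m ∈ Finset.range (k0 + 1),
            (-1 : ℝ) ^ m * ((k0.choose m : ℕ) : ℝ) * ((k0 - m : ℕ) : ℝ) ^ n) *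
          (w : ℝ) ^ n * ((L - w ^ 2 : ℕ) : ℝ) ^ (M - n))
      = ∑ m ∈ range (k0 + 1), (k0.choose m : ℝ) *
          ((-1 : ℝ) ^ m * ((L - (r + m) * w : ℕ) : ℝ) ^ M) := by
    have hsub : Finset.Icc k0 M ⊆ range (M + 1) := fun n hn =>
      Finset.mem_range.2 (by have := (Finset.mem_Icc.1 hn).2; omega)
    have hzero : ∀ n ∈ range (M + 1), n ∉ Finset.Icc k0 M →
        ((M.choose n : ℕ) : ℝ) *
          (∑ m ∈ Finset.range (k0 + 1),
            (-1 : ℝ) ^ m * ((k0.choose m : ℕ) : ℝ) * ((k0 - m : ℕ) : ℝ) ^ n) *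
          (w : ℝ) ^ n * ((L - w ^ 2 : ℕ) : ℝ) ^ (M - n) = 0 := by
      intro n hn hn'
      have hnk : n < k0 := by
        have h1 := Finset.mem_range.1 hn
        rcases Nat.lt_or_ge n k0 with h | h
        · exact h
        · exact absurd (Finset.mem_Icc.2 ⟨h, by omega⟩) hn'
      rw [surj_vanish k0 n hnk]
      ring
    rw [Finset.sum_subset hsub hzero]
    -- full range sum
    have swap : ∑ n ∈ range (M + 1),
            ((M.choose n : ℕ) : ℝ) *
              (∑ m ∈ Finset.range (k0 + 1),
                (-1 : ℝ) ^ m * ((k0.choose m : ℕ) : ℝ) * ((k0 - m : ℕ) : ℝ) ^ n) *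
              (w : ℝ) ^ n * ((L - w ^ 2 : ℕ) : ℝ) ^ (M - n)
          = ∑ m ∈ range (k0 + 1), ∑ n ∈ range (M + 1),
              (-1 : ℝ) ^ m * ((k0.choose m : ℕ) : ℝ) *
                ((((k0 - m : ℕ) : ℝ) * w) ^ n * ((L - w ^ 2 : ℕ) : ℝ) ^ (M - n) *
                  ((M.choose n : ℕ) : ℝ)) := by
        rw [Finset.sum_comm]
        refine Finset.sum_congr rfl fun n _ => ?_
        rw [Finset.mul_sum, Finset.sum_mul, Finset.sum_mul]
        refine Finset.sum_congr rfl fun m _ => ?_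
        ring
    rw [swap]
    refine Finset.sum_congr rfl fun m hm => ?_
    have hm' : m ≤ k0 := by have := Finset.mem_range.1 hm; omega
    rw [← Finset.mul_sum, ← add_pow, hcast m hm']
    ring
  rw [hcount, hRHS]
  ring
end

section
/- Let p be a prime and q an integer coprime with p, L = pq, w = p. The characteristic sets I_1, ..., I_{p+1} of the p+1 CRT sequences satisfy: the difference set of the sequence v_1 (with characteristic set {0, 1, ..., p-1}) is {±1, ..., ±(p-1)} mod L, and for each g ∈ {2, ..., p+1}, the difference set of I_g is disjoint from {±1, ..., ±(p-1)} mod L; consequently, any two distinct elements of I_g (for g ≥ 2) have cyclic distance at least p in Z_L. -/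
open scoped Classical

noncomputable def crtCharSet (p q g : ℕ) : Finset ℕ :=
  (Finset.range (p * q)).filter (fun t =>
    if g = p + 1 then ∃ u < p, t % p = u % p ∧ t % q = 0
    else ∃ u < p, t % p = (u * g) % p ∧ t % q = u % q)

private lemma dvd_small {n a : ℤ} (h : n ∣ a) (h2 : |a| < n) : a = 0 := by
  rcases eq_or_ne a 0 with h0 | h0
  · exact h0
  · exact absurd h2 (not_lt.mpr (Int.le_of_dvd (abs_pos.mpr h0) ((dvd_abs _ _).mpr h)))

private lemma part2 (p L : ℕ) (hp2 : 2 ≤ p) (hL : 2 * p ≤ L) :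
    ((Finset.range p ×ˢ Finset.range p).filter (fun ab => ab.1 ≠ ab.2)).image
        (fun ab => (ab.1 + L - ab.2) % L)
      = Finset.Icc 1 (p - 1) ∪ Finset.Icc (L - (p - 1)) (L - 1) := by
  ext d
  simp only [Finset.mem_image, Finset.mem_filter, Finset.mem_product, Finset.mem_range,
    Finset.mem_union, Finset.mem_Icc, Prod.exists]
  constructor
  · rintro ⟨a, b, ⟨⟨ha, hb⟩, hab⟩, rfl⟩
    rcases lt_or_gt_of_ne hab with h | h
    · right
      have h1 : a + L - b < L := by omega
      rw [Nat.mod_eq_of_lt h1]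
      omega
    · left
      have h1 : a + L - b = (a - b) + L := by omega
      rw [h1, Nat.add_mod_right, Nat.mod_eq_of_lt (by omega)]
      omega
  · rintro (⟨h1, h2⟩ | ⟨h1, h2⟩)
    · refine ⟨d, 0, ⟨⟨by omega, by omega⟩, by omega⟩, ?_⟩
      rw [Nat.sub_zero, Nat.add_mod_right, Nat.mod_eq_of_lt (by omega)]
    · refine ⟨0, L - d, ⟨⟨by omega, by omega⟩, by omega⟩, ?_⟩
      have h3 : 0 + L - (L - d) = d := by omega
      rw [h3, Nat.mod_eq_of_lt (by omega)]

private lemma key (p q g : ℕ) (hp : p.Prime) (hq : 2 * p - 1 ≤ q)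
    (hg2 : 2 ≤ g) (hgp : g ≤ p + 1) (t t' : ℕ)
    (htL : t < p * q) (ht'L : t' < p * q) (hne : t ≠ t')
    (ht : if g = p + 1 then ∃ u < p, t % p = u % p ∧ t % q = 0
          else ∃ u < p, t % p = (u * g) % p ∧ t % q = u % q)
    (ht' : if g = p + 1 then ∃ u < p, t' % p = u % p ∧ t' % q = 0
          else ∃ u < p, t' % p = (u * g) % p ∧ t' % q = u % q)
    (ε : ℤ) (hmod : ε ≡ (t : ℤ) - t' [ZMOD ((p * q : ℕ) : ℤ)])
    (hlt : |ε| < (p : ℤ)) : False := by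
  have hp2 := hp.two_le
  have hq3 : 3 ≤ q := by omega
  have hto : ε ≠ 0 := by
    intro h0
    rw [h0] at hmod
    have hd : ((p * q : ℕ) : ℤ) ∣ (t : ℤ) - t' := by
      have := hmod.dvd
      simpa using this
    have hz : (t : ℤ) - t' = 0 := by
      refine dvd_small hd (abs_lt.mpr ⟨?_, ?_⟩) <;>
      · have h1 : (t : ℤ) < ((p * q : ℕ) : ℤ) := by exact_mod_cast htL
        have h2 : (t' : ℤ) < ((p * q : ℕ) : ℤ) := by exact_mod_cast ht'L
        have h3 := Int.natCast_nonneg t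
        have h4 := Int.natCast_nonneg t'
        linarith
    exact hne (by exact_mod_cast sub_eq_zero.mp hz)
  have hmodp : ε ≡ (t : ℤ) - t' [ZMOD (p : ℤ)] :=
    hmod.of_dvd (by push_cast; exact dvd_mul_right _ _)
  have hmodq : ε ≡ (t : ℤ) - t' [ZMOD (q : ℤ)] :=
    hmod.of_dvd (by push_cast; exact dvd_mul_left _ _)
  by_cases hg : g = p + 1
  · rw [if_pos hg] at ht ht'
    obtain ⟨u, hu, _, htq⟩ := ht
    obtain ⟨u', hu', _, ht'q⟩ := ht'
    have h1 : (q : ℤ) ∣ (t : ℤ) := Int.natCast_dvd_natCast.mpr (Nat.dvd_of_mod_eq_zero htq)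
    have h2 : (q : ℤ) ∣ (t' : ℤ) := Int.natCast_dvd_natCast.mpr (Nat.dvd_of_mod_eq_zero ht'q)
    have h3 : (q : ℤ) ∣ ε := by
      have h4 := hmodq.dvd
      have h5 : (q : ℤ) ∣ (t : ℤ) - t' := dvd_sub h1 h2
      simpa [sub_sub_cancel] using dvd_sub h5 h4
    have hpq : (p : ℤ) ≤ q := by exact_mod_cast (by omega : p ≤ q)
    exact hto (dvd_small h3 (lt_of_lt_of_le hlt hpq))
  · rw [if_neg hg] at ht ht'
    obtain ⟨u, hu, htp, htq⟩ := ht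
    obtain ⟨u', hu', ht'p, ht'q⟩ := ht'
    have e1 : (t : ℤ) ≡ (u : ℤ) [ZMOD (q : ℤ)] := by
      show (t : ℤ) % q = (u : ℤ) % q
      exact_mod_cast htq
    have e2 : (t' : ℤ) ≡ (u' : ℤ) [ZMOD (q : ℤ)] := by
      show (t' : ℤ) % q = (u' : ℤ) % q
      exact_mod_cast ht'q
    have h4 : (q : ℤ) ∣ ε - ((u : ℤ) - u') := by
      have h5 : ε ≡ (u : ℤ) - u' [ZMOD (q : ℤ)] := hmodq.trans (e1.sub e2)
      exact h5.symm.dvd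
    have heps : ε = (u : ℤ) - u' := by
      have h5 := dvd_small h4 (by rw [abs_lt] at hlt ⊢; omega)
      linarith
    have f1 : (t : ℤ) ≡ (u : ℤ) * g [ZMOD (p : ℤ)] := by
      show (t : ℤ) % p = ((u : ℤ) * g) % p
      exact_mod_cast htp
    have f2 : (t' : ℤ) ≡ (u' : ℤ) * g [ZMOD (p : ℤ)] := by
      show (t' : ℤ) % p = ((u' : ℤ) * g) % p
      exact_mod_cast ht'p
    have h6 : ε ≡ ε * g [ZMOD (p : ℤ)] := by
      calc ε ≡ (t : ℤ) - t' [ZMOD (p : ℤ)] := hmodp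
        _ ≡ (u : ℤ) * g - (u' : ℤ) * g [ZMOD (p : ℤ)] := f1.sub f2
        _ = ((u : ℤ) - u') * g := by ring
        _ = ε * g := by rw [heps]
    have h7 : (p : ℤ) ∣ ε * ((g : ℤ) - 1) := by
      have h8 := h6.dvd
      have h9 : ε * ((g : ℤ) - 1) = ε * g - ε := by ring
      rw [h9]
      exact h8
    have hpP : Prime (p : ℤ) := Int.prime_iff_natAbs_prime.mpr (by simpa using hp)
    rcases hpP.dvd_mul.mp h7 with h9 | h9
    · exact hto (dvd_small h9 hlt)
    · have h10 : (0 : ℤ) < (g : ℤ) - 1 := by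
        have h10' : (2 : ℤ) ≤ (g : ℤ) := by exact_mod_cast hg2
        linarith
      have h11 := Int.le_of_dvd h10 h9
      have h12 : (g : ℤ) ≤ p := by exact_mod_cast (by omega : g ≤ p)
      linarith

/-- for `p` prime, `q ≥ 2p-1` coprime with `p`, `L = pq`, `w = p`:
(1) `I_1 = {0, 1, …, p-1}`;
(2) the difference set of `I_1` is `{±1, …, ±(p-1)} mod L`, i.e. the set of cyclic
differences of distinct elements of `{0,…,p-1}` is `{1,…,p-1} ∪ {L-(p-1),…,L-1}`;
(3) for each `g ∈ {2,…,p+1}`, the difference set of `I_g` is disjoint from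
`{±1,…,±(p-1)} mod L`: any two distinct elements of `I_g` have cyclic difference `d`
with `p ≤ d ≤ L - p` (in particular, cyclic distance at least `p`). -/
theorem stmt19 (p q : ℕ) (hp : p.Prime) (hco : Nat.Coprime p q) (hq : 2 * p - 1 ≤ q) :
    (crtCharSet p q 1 = Finset.range p) ∧
    (((Finset.range p ×ˢ Finset.range p).filter (fun ab => ab.1 ≠ ab.2)).image
        (fun ab => (ab.1 + p * q - ab.2) % (p * q))
      = Finset.Icc 1 (p - 1) ∪ Finset.Icc (p * q - (p - 1)) (p * q - 1)) ∧
    (∀ g, 2 ≤ g → g ≤ p + 1 →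
      ∀ t ∈ crtCharSet p q g, ∀ t' ∈ crtCharSet p q g, t ≠ t' →
        p ≤ (t + p * q - t') % (p * q) ∧ (t + p * q - t') % (p * q) ≤ p * q - p) := by
  have hp2 := hp.two_le
  have hq3 : 3 ≤ q := by omega
  have h2pq : 2 * p ≤ p * q := by
    calc 2 * p = p * 2 := by ring
      _ ≤ p * q := Nat.mul_le_mul_left p (by omega)
  have hpLq : p ≤ p * q := by omega
  refine ⟨?_, part2 p (p * q) hp2 h2pq, ?_⟩
  · ext t
    simp only [crtCharSet, Finset.mem_filter, Finset.mem_range]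
    have h1 : (1 : ℕ) ≠ p + 1 := by omega
    rw [if_neg h1]
    constructor
    · rintro ⟨htL, u, hu, hp1, hq1⟩
      rw [mul_one] at hp1
      have hm : t ≡ u [MOD p * q] := (Nat.modEq_and_modEq_iff_modEq_mul hco).mp ⟨hp1, hq1⟩
      have h2 : t % (p * q) = u % (p * q) := hm
      rw [Nat.mod_eq_of_lt htL, Nat.mod_eq_of_lt (lt_of_lt_of_le hu hpLq)] at h2
      exact h2 ▸ hu
    · intro htp
      exact ⟨lt_of_lt_of_le htp hpLq, t, htp, by rw [mul_one], rfl⟩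
  · intro g hg2 hgp t ht t' ht' hne
    simp only [crtCharSet, Finset.mem_filter, Finset.mem_range] at ht ht'
    have hkey := key p q g hp hq hg2 hgp t t' ht.1 ht'.1 hne ht.2 ht'.2
    have hcast : (((t + p * q - t') % (p * q) : ℕ) : ℤ) ≡ (t : ℤ) - t' [ZMOD ((p * q : ℕ) : ℤ)] := by
      have hle : t' ≤ t + p * q := le_trans (le_of_lt ht'.1) (Nat.le_add_left _ _)
      have h1 : ((t + p * q - t' : ℕ) : ℤ) = ((t : ℤ) - t') + ((p * q : ℕ) : ℤ) := by
        push_cast [hle]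
        ring
      show _ % _ = _ % _
      rw [Int.natCast_mod, Int.emod_emod_of_dvd _ dvd_rfl, h1]
      have h2 := Int.add_mul_emod_self_right (a := (t : ℤ) - t') (b := 1) (c := ((p * q : ℕ) : ℤ))
      rw [one_mul] at h2
      exact h2
    obtain ⟨c, hc⟩ : ∃ c, c = p * q := ⟨_, rfl⟩
    rw [← hc] at hkey hcast ⊢
    have htL : t < c := hc ▸ ht.1
    have ht'L : t' < c := hc ▸ ht'.1
    have h2pc : 2 * p ≤ c := hc ▸ h2pq
    obtain ⟨d, hdq⟩ : ∃ d, d = (t + c - t') % c := ⟨_, rfl⟩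
    rw [← hdq] at hcast ⊢
    have hdlt : d < c := hdq ▸ Nat.mod_lt _ (by omega)
    constructor
    · by_contra hcon
      push_neg at hcon
      exact hkey (d : ℤ) hcast (by rw [abs_lt]; constructor <;> [omega; omega])
    · by_contra hcon
      push_neg at hcon
      refine hkey ((d : ℤ) - c) ?_ (by rw [abs_lt]; constructor <;> [omega; omega])
      refine Int.ModEq.trans ?_ hcast
      show ((d : ℤ) - c) % c = (d : ℤ) % c
      conv_rhs => rw [show (d : ℤ) = ((d : ℤ) - c) + c by ring]
      exact (Int.add_mul_emod_self_right (a := (d : ℤ) - c) (b := 1) (c := (c : ℤ)) ▸ (by rw [one_mul]))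
end
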